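/- Let A and Ã be symmetric n×n real matrices. Let u₁, …, u_k be orthonormal eigenvectors of A corresponding to its k largest eigenvalues, and ũ₁, …, ũ_k orthonormal eigenvectors of Ã corresponding to its k largest eigenvalues, and set P_k = Σ_{i=1}^k u_i·u_i^T and P̃_k = Σ_{i=1}^k ũ_i·ũ_i^T. Let λ_k(A) denote the k-th largest eigenvalue of A and λ_{k+1}(Ã) the (k+1)-th largest eigenvalue of Ã. If λ_k(A) > λ_{k+1}(Ã), then ‖P_k − P̃_k‖₂ ≤ ‖A − Ã‖₂ / (λ_k(A) − λ_{k+1}(Ã)). -/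

import Mathlib

open Matrix

/-- The spectral norm (largest singular value) of a matrix, as the operator norm of the
induced linear map between Euclidean spaces. -/
noncomputable def specNorm {n m : ℕ} (M : Matrix (Fin n) (Fin m) ℝ) : ℝ :=
  ‖(Matrix.toEuclideanLin M).toContinuousLinearMap‖

set_option linter.unusedSectionVars false
open Matrix RealInnerProductSpace
variable {F : Type*} [NormedAddCommGroup F] [InnerProductSpace ℝ F] [FiniteDimensional ℝ F]
variable {n k : ℕ}

lemma ob_ite (b : OrthonormalBasis (Fin n) ℝ F) (i j : Fin n) :
    ⟪b i, b j⟫ = if i = j then (1:ℝ) else 0 := orthonormal_iff_ite.mp b.orthonormal i j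

lemma expand_coeff (b : OrthonormalBasis (Fin n) ℝ F) (g : Fin n → ℝ) (i : Fin n) :
    ⟪b i, ∑ j : Fin n, g j • b j⟫ = g i := by
  rw [inner_sum]
  simp [real_inner_smul_right, ob_ite, mul_ite, Finset.sum_ite_eq]

lemma parseval (b : OrthonormalBasis (Fin n) ℝ F) (x y : F) :
    ⟪x, y⟫ = ∑ i : Fin n, ⟪b i, x⟫ * ⟪b i, y⟫ := by
  rw [← b.sum_inner_mul_inner x y]
  congr 1; ext i; rw [real_inner_comm x (b i)]

lemma normsq_eq_sum (b : OrthonormalBasis (Fin n) ℝ F) (x : F) :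
    ‖x‖ ^ 2 = ∑ i : Fin n, ⟪b i, x⟫ ^ 2 := by
  rw [← real_inner_self_eq_norm_sq, parseval b x x]
  congr 1; ext i; rw [sq]

section Proj
variable (b : OrthonormalBasis (Fin n) ℝ F) (P : F →L[ℝ] F)
  (hP : ∀ x, P x = ∑ j : Fin n, if (j:ℕ) < k then ⟪b j, x⟫ • b j else 0)
include hP

lemma proj_coeff (i : Fin n) (x : F) :
    ⟪b i, P x⟫ = if (i:ℕ) < k then ⟪b i, x⟫ else 0 := by
  have : P x = ∑ j : Fin n, (if (j:ℕ) < k then ⟪b j, x⟫ else 0) • b j := by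
    rw [hP]; congr 1; ext j; by_cases h : (j:ℕ) < k <;> simp [h]
  rw [this, expand_coeff]

lemma proj_selfadj (x y : F) : ⟪P x, y⟫ = ⟪x, P y⟫ := by
  rw [parseval b (P x) y, parseval b x (P y)]
  congr 1; ext i
  simp only [proj_coeff b P hP]
  by_cases h : (i:ℕ) < k <;> simp [h]

lemma proj_idem (x : F) : P (P x) = P x := by
  conv_lhs => rw [hP (P x)]
  simp only [proj_coeff b P hP]
  rw [hP x]
  congr 1; ext j
  by_cases h : (j:ℕ) < k <;> simp [h]

lemma proj_normsq (x : F) :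
    ‖P x‖ ^ 2 = ∑ i : Fin n, if (i:ℕ) < k then ⟪b i, x⟫ ^ 2 else 0 := by
  rw [← real_inner_self_eq_norm_sq, parseval b (P x) (P x)]
  congr 1; ext i
  rw [proj_coeff b P hP]
  by_cases h : (i:ℕ) < k <;> simp [h, sq]

lemma proj_contract (x : F) : ‖P x‖ ≤ ‖x‖ := by
  have h1 : ‖P x‖ ^ 2 ≤ ‖x‖ ^ 2 := by
    rw [proj_normsq b P hP, normsq_eq_sum b]
    apply Finset.sum_le_sum
    intro i _
    by_cases h : (i:ℕ) < k
    · simp [h]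
    · simp [h, sq_nonneg]
  nlinarith [norm_nonneg (P x), norm_nonneg x]

lemma inner_proj_self (x : F) : ⟪x, P x⟫ = ‖P x‖ ^ 2 := by
  rw [← real_inner_self_eq_norm_sq, proj_selfadj b P hP x (P x), proj_idem b P hP]

lemma proj_norm_sub_sq (x : F) : ‖x - P x‖ ^ 2 = ‖x‖ ^ 2 - ‖P x‖ ^ 2 := by
  rw [norm_sub_sq_real, inner_proj_self b P hP]; ring

lemma proj_basis (j : Fin n) : P (b j) = if (j:ℕ) < k then b j else 0 := by
  rw [hP]
  rw [Finset.sum_eq_single j]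
  · by_cases h : (j:ℕ) < k <;> simp [h, ob_ite]
  · intro i _ hij
    by_cases h : (i:ℕ) < k <;> simp [h, ob_ite, hij, Ne.symm hij]
  · simp

end Proj

section Eig
variable (b : OrthonormalBasis (Fin n) ℝ F) (lam : Fin n → ℝ) (A : F →L[ℝ] F)
  (hA : ∀ j, A (b j) = lam j • b j)
include hA

lemma eig_expand (x : F) : A x = ∑ j : Fin n, (lam j * ⟪b j, x⟫) • b j := by
  conv_lhs => rw [← b.sum_repr' x, map_sum]
  congr 1; ext j
  rw [ContinuousLinearMap.map_smul, hA, smul_smul, mul_comm]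

lemma eig_coeff (i : Fin n) (x : F) : ⟪b i, A x⟫ = lam i * ⟪b i, x⟫ := by
  rw [eig_expand b lam A hA, expand_coeff]

lemma eig_selfadj (x y : F) : ⟪A x, y⟫ = ⟪x, A y⟫ := by
  rw [parseval b (A x) y, parseval b x (A y)]
  congr 1; ext i
  simp only [eig_coeff b lam A hA]
  ring

lemma eig_quadform (x : F) : ⟪x, A x⟫ = ∑ i : Fin n, lam i * ⟪b i, x⟫ ^ 2 := by
  rw [parseval b x (A x)]
  congr 1; ext i
  rw [eig_coeff b lam A hA]; ring

end Eig


lemma exists_unit_norm_attains (T : F →L[ℝ] F) (h : 0 < Module.finrank ℝ F) :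
    ∃ v : F, ‖v‖ = 1 ∧ ‖T v‖ = ‖T‖ := by
  have : Nontrivial F := Module.nontrivial_of_finrank_pos h
  have hsph : (Metric.sphere (0:F) 1).Nonempty := NormedSpace.sphere_nonempty.mpr zero_le_one
  obtain ⟨v, hv, hmax⟩ := (isCompact_sphere (0:F) 1).exists_isMaxOn hsph
    (Continuous.norm T.continuous).continuousOn
  have hv1 : ‖v‖ = 1 := mem_sphere_zero_iff_norm.mp hv
  refine ⟨v, hv1, le_antisymm (by simpa [hv1] using T.le_opNorm v) ?_⟩
  refine T.opNorm_le_bound (norm_nonneg _) fun x => ?_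
  rcases eq_or_ne x 0 with rfl | hx
  · simp
  · have hxn : ‖x‖ ≠ 0 := norm_ne_zero_iff.mpr hx
    have hmem : (‖x‖⁻¹ • x) ∈ Metric.sphere (0:F) 1 := by
      simp [mem_sphere_zero_iff_norm, norm_smul, abs_of_nonneg, inv_mul_cancel₀ hxn]
    have := hmax hmem
    simp only [Set.mem_setOf_eq, T.map_smul, norm_smul, norm_inv, norm_norm] at this
    have h2 : ‖T x‖ * ‖x‖⁻¹ ≤ ‖T v‖ := by simpa [mul_comm] using this
    calc ‖T x‖ = (‖T x‖ * ‖x‖⁻¹) * ‖x‖ := by field_simp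
    _ ≤ ‖T v‖ * ‖x‖ := by nlinarith [norm_nonneg x, norm_nonneg (T x)]

set_option maxHeartbeats 2000000 in
lemma dk_core {F : Type*} [NormedAddCommGroup F] [InnerProductSpace ℝ F] [FiniteDimensional ℝ F]
    {n k : ℕ} (hk : 0 < k) (hkn : k < n) (hdim : Module.finrank ℝ F = n)
    (b bt : OrthonormalBasis (Fin n) ℝ F)
    (lam lamt : Fin n → ℝ) (a c : ℝ)
    (A B P Q : F →L[ℝ] F)
    (hA : ∀ j, A (b j) = lam j • b j)
    (hB : ∀ j, B (bt j) = lamt j • bt j)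
    (hP : ∀ x, P x = ∑ j : Fin n, if (j:ℕ) < k then ⟪b j, x⟫ • b j else 0)
    (hQ : ∀ x, Q x = ∑ j : Fin n, if (j:ℕ) < k then ⟪bt j, x⟫ • bt j else 0)
    (ha : ∀ j : Fin n, (j:ℕ) < k → a ≤ lam j)
    (hc : ∀ j : Fin n, k ≤ (j:ℕ) → lamt j ≤ c)
    (hgap : c < a) :
    ‖P - Q‖ ≤ ‖A - B‖ / (a - c) := by
  have hδ : (0:ℝ) < a - c := sub_pos.mpr hgap
  set S : F →L[ℝ] F := ((1 : F →L[ℝ] F) - Q).comp P with hSdef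
  have hSapp : ∀ x, S x = P x - Q (P x) := by
    intro x
    simp [hSdef, ContinuousLinearMap.comp_apply, ContinuousLinearMap.sub_apply]
  set s := ‖S‖ with hs
  have hs0 : 0 ≤ s := norm_nonneg _
  have hadj : P.comp ((1 : F →L[ℝ] F) - Q) = ContinuousLinearMap.adjoint S := by
    rw [ContinuousLinearMap.eq_adjoint_iff]
    intro x y
    simp only [hSdef, ContinuousLinearMap.comp_apply, ContinuousLinearMap.sub_apply,
      ContinuousLinearMap.one_apply]
    rw [proj_selfadj b P hP, inner_sub_left, inner_sub_right,
      proj_selfadj bt Q hQ x (P y)]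
  have hPQnorm : ∀ x, ‖P (x - Q x)‖ ≤ s * ‖x‖ := by
    intro x
    have h2 : ‖P.comp ((1 : F →L[ℝ] F) - Q)‖ = s := by
      rw [hadj]; exact ContinuousLinearMap.adjoint.norm_map S
    have h1 := (P.comp ((1 : F →L[ℝ] F) - Q)).le_opNorm x
    rw [h2] at h1
    simpa only [ContinuousLinearMap.comp_apply, ContinuousLinearMap.sub_apply,
      ContinuousLinearMap.one_apply] using h1
  have hfin : 0 < Module.finrank ℝ F := by rw [hdim]; omega
  -- Step A : s * (a - c) ≤ ‖A - B‖
  have hSbound : s * (a - c) ≤ ‖A - B‖ := by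
    rcases eq_or_lt_of_le hs0 with h0 | hspos
    · rw [← h0, zero_mul]; exact norm_nonneg _
    · obtain ⟨v, hv1, hvm⟩ := exists_unit_norm_attains S hfin
      have hSPv : S (P v) = S v := by
        rw [hSapp, hSapp, proj_idem b P hP]
      have hPv1 : ‖P v‖ = 1 := by
        have hle : ‖P v‖ ≤ 1 := by simpa [hv1] using proj_contract b P hP v
        have h5 : s ≤ s * ‖P v‖ := by
          calc s = ‖S (P v)‖ := by rw [hSPv, hvm]
          _ ≤ s * ‖P v‖ := S.le_opNorm (P v)
        nlinarith
      have hPveq : P v = v := by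
        have h2 : ‖v - P v‖ ^ 2 = 0 := by
          rw [proj_norm_sub_sq b P hP, hv1, hPv1]; ring
        have h3 : v - P v = 0 := norm_eq_zero.mp (sq_eq_zero_iff.mp h2)
        exact (sub_eq_zero.mp h3).symm
      have hvcoef : ∀ j : Fin n, ¬ ((j:ℕ) < k) → ⟪b j, v⟫ = 0 := by
        intro j hj
        have h6 := proj_coeff b P hP j v
        rw [hPveq, if_neg hj] at h6
        exact h6
      set w : F := s⁻¹ • S v with hwdef
      have hSv : S v = v - Q v := by rw [hSapp, hPveq]
      have hsv : ‖S v‖ = s := hvm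
      have hw1 : ‖w‖ = 1 := by
        rw [hwdef, norm_smul, hsv, norm_inv, Real.norm_eq_abs, abs_of_pos hspos,
          inv_mul_cancel₀ (ne_of_gt hspos)]
      have hQSv : Q (S v) = 0 := by
        rw [hSv, Q.map_sub, proj_idem bt Q hQ, sub_self]
      have hQw : Q w = 0 := by rw [hwdef, Q.map_smul, hQSv, smul_zero]
      have hwcoef : ∀ j : Fin n, (j:ℕ) < k → ⟪bt j, w⟫ = 0 := by
        intro j hj
        have h7 := proj_coeff bt Q hQ j w
        rw [hQw, if_pos hj] at h7
        simpa using h7.symm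
      have hPwnorm : ‖P w‖ ≤ s := by
        have h8 := hPQnorm w
        rwa [hQw, sub_zero, hw1, mul_one] at h8
      have hvQvnorm : ‖v - Q v‖ ^ 2 = 1 - ‖Q v‖ ^ 2 := by
        rw [proj_norm_sub_sq bt Q hQ, hv1]; ring
      have hSvsq : ‖v - Q v‖ ^ 2 = s ^ 2 := by rw [← hSv, hsv]
      have hSvv : ⟪S v, v⟫ = s ^ 2 := by
        have hQvv : ⟪Q v, v⟫ = ‖Q v‖ ^ 2 := by
          rw [real_inner_comm]; exact inner_proj_self bt Q hQ v
        rw [hSv, inner_sub_left, real_inner_self_eq_norm_sq, hQvv, hv1]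
        nlinarith
      have hPwv : ⟪P w, v⟫ = s := by
        rw [proj_selfadj b P hP, hPveq, hwdef, real_inner_smul_left, hSvv, sq]
        field_simp
      have hPw : P w = s • v := by
        have hexp : ‖P w - s • v‖ ^ 2 = ‖P w‖ ^ 2 - s ^ 2 := by
          rw [norm_sub_sq_real, real_inner_smul_right, hPwv, norm_smul, hv1,
            Real.norm_eq_abs, abs_of_pos hspos]
          ring
        have h0' : ‖P w - s • v‖ ^ 2 ≤ 0 := by
          rw [hexp]; nlinarith [hPwnorm, norm_nonneg (P w)]
        have h1' : P w - s • v = 0 :=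
          norm_eq_zero.mp (sq_eq_zero_iff.mp (le_antisymm h0' (sq_nonneg _)))
        exact sub_eq_zero.mp h1'
      -- quadratic form bounds
      have hvsum : ∑ i : Fin n, ⟪b i, v⟫ ^ 2 = 1 := by
        rw [← normsq_eq_sum b, hv1]; norm_num
      have hqA : a ≤ ⟪v, A v⟫ := by
        rw [eig_quadform b lam A hA]
        calc a = ∑ i : Fin n, a * ⟪b i, v⟫ ^ 2 := by rw [← Finset.mul_sum, hvsum, mul_one]
        _ ≤ ∑ i : Fin n, lam i * ⟪b i, v⟫ ^ 2 := by
            apply Finset.sum_le_sum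
            intro i _
            by_cases h : (i:ℕ) < k
            · exact mul_le_mul_of_nonneg_right (ha i h) (sq_nonneg _)
            · rw [hvcoef i h]; simp
      have hwsum : ∑ i : Fin n, ⟪bt i, w⟫ ^ 2 = 1 := by
        rw [← normsq_eq_sum bt, hw1]; norm_num
      have hqB : ⟪w, B w⟫ ≤ c := by
        rw [eig_quadform bt lamt B hB]
        calc ∑ i : Fin n, lamt i * ⟪bt i, w⟫ ^ 2 ≤ ∑ i : Fin n, c * ⟪bt i, w⟫ ^ 2 := by
              apply Finset.sum_le_sum
              intro i _
              by_cases h : (i:ℕ) < k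
              · rw [hwcoef i h]; simp
              · exact mul_le_mul_of_nonneg_right (hc i (le_of_not_gt h)) (sq_nonneg _)
        _ = c := by rw [← Finset.mul_sum, hwsum, mul_one]
      -- key identities
      have hwAv : ⟪w, A v⟫ = s * ⟪v, A v⟫ := by
        have hAvmem : P (A v) = A v := by
          rw [hP (A v), eig_expand b lam A hA v]
          simp only [expand_coeff b]
          congr 1; ext j
          by_cases h : (j:ℕ) < k
          · rw [if_pos h]
          · rw [if_neg h, hvcoef j h, mul_zero, zero_smul]
        calc ⟪w, A v⟫ = ⟪w, P (A v)⟫ := by rw [hAvmem]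
        _ = ⟪P w, A v⟫ := (proj_selfadj b P hP w (A v)).symm
        _ = s * ⟪v, A v⟫ := by rw [hPw, real_inner_smul_left]
      have hwBv : ⟪w, B v⟫ = s * ⟪w, B w⟫ := by
        have hQBw : Q (B w) = 0 := by
          rw [hQ (B w)]
          apply Finset.sum_eq_zero
          intro j _
          by_cases h : (j:ℕ) < k
          · rw [if_pos h, eig_coeff bt lamt B hB, hwcoef j h, mul_zero, zero_smul]
          · rw [if_neg h]
        have hvdecomp : v = Q v + s • w := by
          rw [hwdef, smul_smul, mul_inv_cancel₀ (ne_of_gt hspos), one_smul, hSv]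
          abel
        calc ⟪w, B v⟫ = ⟪B w, v⟫ := by
              rw [real_inner_comm, eig_selfadj bt lamt B hB]
              exact (real_inner_comm v (B w)).symm
        _ = ⟪B w, Q v⟫ + s * ⟪B w, w⟫ := by
              conv_lhs => rw [hvdecomp]
              rw [inner_add_right, real_inner_smul_right]
        _ = s * ⟪w, B w⟫ := by
              rw [← proj_selfadj bt Q hQ (B w) v, hQBw, inner_zero_left, zero_add,
                real_inner_comm (B w) w]
      have hfinal : s * (a - c) ≤ ⟪w, (A - B) v⟫ := by
        have h9 : ⟪w, (A - B) v⟫ = s * (⟪v, A v⟫ - ⟪w, B w⟫) := by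
          rw [ContinuousLinearMap.sub_apply, inner_sub_right, hwAv, hwBv]; ring
        rw [h9]
        have h10 : a - c ≤ ⟪v, A v⟫ - ⟪w, B w⟫ := by linarith
        exact mul_le_mul_of_nonneg_left h10 (le_of_lt hspos)
      have hub : ⟪w, (A - B) v⟫ ≤ ‖A - B‖ := by
        calc ⟪w, (A - B) v⟫ ≤ ‖w‖ * ‖(A - B) v‖ := real_inner_le_norm _ _
        _ = ‖(A - B) v‖ := by rw [hw1, one_mul]
        _ ≤ ‖A - B‖ * ‖v‖ := (A - B).le_opNorm v
        _ = ‖A - B‖ := by rw [hv1, mul_one]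
      linarith
  -- Step B : ∀ x, ‖Q x - P (Q x)‖ ≤ s * ‖Q x‖
  have hstep2 : ∀ x, ‖Q x - P (Q x)‖ ≤ s * ‖Q x‖ := by
    by_cases hs1 : 1 ≤ s
    · intro x
      have h1 : ‖Q x - P (Q x)‖ ^ 2 ≤ ‖Q x‖ ^ 2 := by
        rw [proj_norm_sub_sq b P hP]
        nlinarith [norm_nonneg (P (Q x))]
      have h2 : ‖Q x - P (Q x)‖ ≤ ‖Q x‖ := by
        nlinarith [norm_nonneg (Q x - P (Q x)), norm_nonneg (Q x)]
      nlinarith [norm_nonneg (Q x)]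
    · push_neg at hs1
      set emb : Fin k → Fin n := fun i => ⟨(i:ℕ), lt_trans i.isLt hkn⟩ with hembdef
      have hembinj : Function.Injective emb := by
        intro i j hij
        apply Fin.ext
        simpa [hembdef] using congrArg Fin.val hij
      set U : Submodule ℝ F := Submodule.span ℝ (Set.range (b ∘ emb)) with hUdef
      set V : Submodule ℝ F := Submodule.span ℝ (Set.range (bt ∘ emb)) with hVdef
      have hUrank : Module.finrank ℝ U = k := by
        rw [hUdef, finrank_span_eq_card ((b.orthonormal.comp emb hembinj).linearIndependent)]
        simp
      have hVrank : Module.finrank ℝ V = k := by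
        rw [hVdef, finrank_span_eq_card ((bt.orthonormal.comp emb hembinj).linearIndependent)]
        simp
      have hPU : ∀ x, P x ∈ U := by
        intro x
        rw [hP]
        apply Submodule.sum_mem
        intro j _
        by_cases h : (j:ℕ) < k
        · rw [if_pos h]
          refine Submodule.smul_mem _ _ (Submodule.subset_span ⟨⟨(j:ℕ), h⟩, ?_⟩)
          rfl
        · rw [if_neg h]; exact Submodule.zero_mem _
      have hQV : ∀ x, Q x ∈ V := by
        intro x
        rw [hQ]
        apply Submodule.sum_mem
        intro j _
        by_cases h : (j:ℕ) < k
        · rw [if_pos h]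
          refine Submodule.smul_mem _ _ (Submodule.subset_span ⟨⟨(j:ℕ), h⟩, ?_⟩)
          rfl
        · rw [if_neg h]; exact Submodule.zero_mem _
      have hPfixU : ∀ x ∈ U, P x = x := by
        intro x hx
        induction hx using Submodule.span_induction with
        | mem y hy =>
          obtain ⟨i, rfl⟩ := hy
          show P (b (emb i)) = b (emb i)
          rw [proj_basis b P hP, if_pos]
          exact i.isLt
        | zero => simp
        | add y z hy hz ihy ihz => rw [_root_.map_add, ihy, ihz]
        | smul t y hy ihy => rw [P.map_smul, ihy]
      have hlow : ∀ x ∈ U, (1 - s^2) * ‖x‖^2 ≤ ‖Q x‖^2 := by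
        intro x hx
        have h1 : ‖x - Q x‖ = ‖S x‖ := by rw [hSapp, hPfixU x hx]
        have h2 : ‖S x‖ ≤ s * ‖x‖ := S.le_opNorm x
        have h3 : ‖x - Q x‖^2 = ‖x‖^2 - ‖Q x‖^2 := proj_norm_sub_sq bt Q hQ x
        nlinarith [norm_nonneg x, norm_nonneg (S x)]
      set Φ : U →ₗ[ℝ] V :=
        LinearMap.codRestrict V ((Q : F →ₗ[ℝ] F).comp U.subtype) (fun u => hQV u) with hΦdef
      have hΦinj : Function.Injective Φ := by
        rw [← LinearMap.ker_eq_bot, Submodule.eq_bot_iff]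
        intro x hx
        rw [LinearMap.mem_ker] at hx
        have hQx : Q (x:F) = 0 := congrArg Subtype.val hx
        have h11 := hlow (x:F) x.2
        rw [hQx] at h11
        simp only [norm_zero] at h11
        have h1s : 0 < 1 - s^2 := by nlinarith [hs0, hs1]
        have hx0 : ‖(x:F)‖ = 0 := by
          by_contra hne
          have hpos : 0 < ‖(x:F)‖ := lt_of_le_of_ne (norm_nonneg _) (Ne.symm hne)
          nlinarith [mul_pos h1s (mul_pos hpos hpos)]
        exact Subtype.ext (norm_eq_zero.mp hx0)
      have hΦsurj : Function.Surjective Φ :=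
        (LinearMap.injective_iff_surjective_of_finrank_eq_finrank
          (by rw [hUrank, hVrank])).mp hΦinj
      intro x
      have hyV : Q x ∈ V := hQV x
      have hQy : Q (Q x) = Q x := proj_idem bt Q hQ x
      rcases eq_or_ne (Q x) 0 with h0 | hy0
      · rw [h0]; simp
      · obtain ⟨⟨z, hzU⟩, hΦz⟩ := hΦsurj ⟨Q x, hyV⟩
        have hQz : Q z = Q x := congrArg Subtype.val hΦz
        have hPyz : ⟪P (Q x), z⟫ = ‖Q x‖^2 := by
          rw [proj_selfadj b P hP, hPfixU z hzU]
          conv_lhs => rw [← hQy]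
          rw [proj_selfadj bt Q hQ, hQz, real_inner_self_eq_norm_sq]
        have hz_bound : (1 - s^2) * ‖z‖^2 ≤ ‖Q x‖^2 := by
          have h12 := hlow z hzU
          rwa [hQz] at h12
        have hy2 : 0 < ‖Q x‖ := norm_pos_iff.mpr hy0
        have h1s : 0 < 1 - s^2 := by nlinarith [hs0, hs1]
        have hPy_lb : (1 - s^2) * ‖Q x‖^2 ≤ ‖P (Q x)‖^2 := by
          have hcs : ⟪P (Q x), z⟫ ≤ ‖P (Q x)‖ * ‖z‖ := real_inner_le_norm _ _
          rw [hPyz] at hcs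
          have h5 : ‖Q x‖^2 * ‖Q x‖^2 ≤ ‖P (Q x)‖^2 * ‖z‖^2 := by
            nlinarith [norm_nonneg (P (Q x)), norm_nonneg z, sq_nonneg ‖Q x‖]
          nlinarith [norm_nonneg (P (Q x)), norm_nonneg z, mul_pos hy2 hy2]
        have h13 : ‖Q x - P (Q x)‖^2 ≤ (s * ‖Q x‖)^2 := by
          rw [proj_norm_sub_sq b P hP]
          nlinarith
        nlinarith [norm_nonneg (Q x - P (Q x)), mul_nonneg hs0 (norm_nonneg (Q x))]
  -- Step C : ‖P - Q‖ ≤ s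
  have hPQle : ‖P - Q‖ ≤ s := by
    refine ContinuousLinearMap.opNorm_le_bound _ hs0 fun x => ?_
    have e1 : (P - Q) x = P (x - Q x) - (Q x - P (Q x)) := by
      simp only [ContinuousLinearMap.sub_apply, _root_.map_sub]
      abel
    have horth : ⟪P (x - Q x), Q x - P (Q x)⟫ = 0 := by
      rw [proj_selfadj b P hP, P.map_sub, proj_idem b P hP, sub_self, inner_zero_right]
    have epyth : ‖(P - Q) x‖^2 = ‖P (x - Q x)‖^2 + ‖Q x - P (Q x)‖^2 := by
      rw [e1, norm_sub_sq_real, horth]; ring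
    have hb1 : ‖P (x - Q x)‖ ≤ s * ‖x - Q x‖ := by
      have h14 := hPQnorm (x - Q x)
      rwa [Q.map_sub, proj_idem bt Q hQ, sub_self, sub_zero] at h14
    have hb2 := hstep2 x
    have hxpyth : ‖x - Q x‖^2 + ‖Q x‖^2 = ‖x‖^2 := by
      rw [proj_norm_sub_sq bt Q hQ]; ring
    have hQxle : ‖Q x‖ ≤ ‖x‖ := proj_contract bt Q hQ x
    have t1 : ‖P (x - Q x)‖^2 ≤ s^2 * ‖x - Q x‖^2 := by
      nlinarith [norm_nonneg (P (x - Q x)), mul_nonneg hs0 (norm_nonneg (x - Q x))]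
    have t2 : ‖Q x - P (Q x)‖^2 ≤ s^2 * ‖Q x‖^2 := by
      nlinarith [norm_nonneg (Q x - P (Q x)), mul_nonneg hs0 (norm_nonneg (Q x))]
    have h15 : ‖(P - Q) x‖^2 ≤ (s * ‖x‖)^2 := by
      rw [epyth]
      nlinarith [sq_nonneg s]
    nlinarith [norm_nonneg ((P - Q) x), mul_nonneg hs0 (norm_nonneg x)]
  calc ‖P - Q‖ ≤ s := hPQle
  _ ≤ ‖A - B‖ / (a - c) := by
    rw [le_div_iff₀ hδ]
    exact hSbound

lemma matrix_sum_mulVec {ι : Type*} {n : ℕ} (s : Finset ι) (M : ι → Matrix (Fin n) (Fin n) ℝ)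
    (y : Fin n → ℝ) : (∑ i ∈ s, M i) *ᵥ y = ∑ i ∈ s, (M i) *ᵥ y := by
  ext j
  simp only [Matrix.mulVec, dotProduct, Finset.sum_apply, Matrix.sum_apply,
    Finset.sum_mul]
  rw [Finset.sum_comm]

lemma vecMulVec_mulVec' {n : ℕ} (a bv y : Fin n → ℝ) :
    (Matrix.vecMulVec a bv) *ᵥ y = (bv ⬝ᵥ y) • a := by
  ext i
  simp only [Matrix.mulVec, Matrix.vecMulVec_apply, dotProduct, Pi.smul_apply,
    smul_eq_mul, Finset.sum_mul]
  exact Finset.sum_congr rfl fun l _ => by ring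

/-- **Davis–Kahan sin Θ theorem.** Let `A` and `Ã` be symmetric matrices with
orthonormal eigenbases `u`, `ũ` and eigenvalues `lam`, `lamt` in descending order.
If `λ_k(A) > λ_{k+1}(Ã)` then, with `P_k` and `P̃_k` the projections onto the top `k`
eigenvectors of `A` and `Ã` respectively,
`‖P_k − P̃_k‖₂ ≤ ‖A − Ã‖₂ / (λ_k(A) − λ_{k+1}(Ã))`. -/
theorem davis_kahan_sin_theta
    (n k : ℕ) (hk1 : 1 ≤ k) (hkn : k < n)
    (A At : Matrix (Fin n) (Fin n) ℝ) (hA : A.IsSymm) (hAt : At.IsSymm)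
    (u ut : Fin n → Fin n → ℝ) (lam lamt : Fin n → ℝ)
    (h_orth : ∀ i j, dotProduct (u i) (u j) = if i = j then 1 else 0)
    (ht_orth : ∀ i j, dotProduct (ut i) (ut j) = if i = j then 1 else 0)
    (h_eig : ∀ i, A.mulVec (u i) = lam i • u i)
    (ht_eig : ∀ i, At.mulVec (ut i) = lamt i • ut i)
    (h_anti : Antitone lam) (ht_anti : Antitone lamt)
    (h_gap : lamt ⟨k, hkn⟩ < lam ⟨k - 1, by omega⟩)
    (Pk Ptk : Matrix (Fin n) (Fin n) ℝ)
    (hPk : Pk = ∑ i : Fin n, if (i : ℕ) < k then Matrix.vecMulVec (u i) (u i) else 0)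
    (hPtk : Ptk = ∑ i : Fin n, if (i : ℕ) < k then Matrix.vecMulVec (ut i) (ut i) else 0) :
    specNorm (Pk - Ptk) ≤ specNorm (A - At) / (lam ⟨k - 1, by omega⟩ - lamt ⟨k, hkn⟩) := by
  classical
  haveI : Nonempty (Fin n) := ⟨⟨0, by omega⟩⟩
  -- orthonormal bases
  have mkOB : ∀ (w : Fin n → Fin n → ℝ),
      (∀ i j, dotProduct (w i) (w j) = if i = j then 1 else 0) →
      ∃ bb : OrthonormalBasis (Fin n) ℝ (EuclideanSpace ℝ (Fin n)),
        ∀ i, bb i = (WithLp.equiv 2 (Fin n → ℝ)).symm (w i) := by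
    intro w hw
    have horth : Orthonormal ℝ (fun i => (WithLp.equiv 2 (Fin n → ℝ)).symm (w i)) := by
      rw [orthonormal_iff_ite]
      intro i j
      rw [WithLp.equiv_symm_apply, EuclideanSpace.inner_toLp_toLp, dotProduct_comm]
      simpa using hw i j
    have hcard : Fintype.card (Fin n) = Module.finrank ℝ (EuclideanSpace ℝ (Fin n)) := by
      simp
    have hspan := horth.linearIndependent.span_eq_top_of_card_eq_finrank hcard
    exact ⟨OrthonormalBasis.mk horth hspan.ge, fun i => by
      rw [OrthonormalBasis.coe_mk]⟩
  obtain ⟨b, hb⟩ := mkOB u h_orth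
  obtain ⟨bt, hbt⟩ := mkOB ut ht_orth
  -- the operators
  set 𝒜 : EuclideanSpace ℝ (Fin n) →L[ℝ] EuclideanSpace ℝ (Fin n) :=
    (Matrix.toEuclideanLin A).toContinuousLinearMap with h𝒜
  set ℬ : EuclideanSpace ℝ (Fin n) →L[ℝ] EuclideanSpace ℝ (Fin n) :=
    (Matrix.toEuclideanLin At).toContinuousLinearMap with hℬ
  set P : EuclideanSpace ℝ (Fin n) →L[ℝ] EuclideanSpace ℝ (Fin n) :=
    (Matrix.toEuclideanLin Pk).toContinuousLinearMap with hPdef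
  set Q : EuclideanSpace ℝ (Fin n) →L[ℝ] EuclideanSpace ℝ (Fin n) :=
    (Matrix.toEuclideanLin Ptk).toContinuousLinearMap with hQdef
  have happly : ∀ (M : Matrix (Fin n) (Fin n) ℝ) (x : EuclideanSpace ℝ (Fin n)),
      (Matrix.toEuclideanLin M).toContinuousLinearMap x =
        (WithLp.equiv 2 (Fin n → ℝ)).symm (M *ᵥ (WithLp.equiv 2 (Fin n → ℝ)) x) := by
    intro M x
    rfl
  -- eigen relations
  have h𝒜b : ∀ j, 𝒜 (b j) = lam j • b j := by
    intro j
    rw [hb, h𝒜, happly]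
    rw [Equiv.apply_symm_apply, h_eig j, WithLp.equiv_symm_apply, WithLp.toLp_smul]
  have hℬb : ∀ j, ℬ (bt j) = lamt j • bt j := by
    intro j
    rw [hbt, hℬ, happly]
    rw [Equiv.apply_symm_apply, ht_eig j, WithLp.equiv_symm_apply, WithLp.toLp_smul]
  -- projections
  have hproj : ∀ (w : Fin n → Fin n → ℝ) (bb : OrthonormalBasis (Fin n) ℝ (EuclideanSpace ℝ (Fin n)))
      (hbb : ∀ i, bb i = (WithLp.equiv 2 (Fin n → ℝ)).symm (w i))
      (M : Matrix (Fin n) (Fin n) ℝ)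
      (hM : M = ∑ i : Fin n, if (i : ℕ) < k then Matrix.vecMulVec (w i) (w i) else 0)
      (x : EuclideanSpace ℝ (Fin n)),
      (Matrix.toEuclideanLin M).toContinuousLinearMap x =
        ∑ j : Fin n, if (j:ℕ) < k then ⟪bb j, x⟫ • bb j else 0 := by
    intro w bb hbb M hM x
    rw [happly, hM, matrix_sum_mulVec]
    have hterm : ∀ j : Fin n,
        (if (j:ℕ) < k then Matrix.vecMulVec (w j) (w j) else 0) *ᵥ (WithLp.equiv 2 (Fin n → ℝ)) x
          = if (j:ℕ) < k then (w j ⬝ᵥ (WithLp.equiv 2 (Fin n → ℝ)) x) • w j else 0 := by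
      intro j
      by_cases h : (j:ℕ) < k
      · rw [if_pos h, if_pos h, vecMulVec_mulVec']
      · rw [if_neg h, if_neg h, Matrix.zero_mulVec]
    simp only [hterm]
    have hms := map_sum ((WithLp.linearEquiv 2 ℝ (Fin n → ℝ)).symm)
      (fun (j : Fin n) => if (j:ℕ) < k then (w j ⬝ᵥ (WithLp.equiv 2 (Fin n → ℝ)) x) • w j else 0)
      Finset.univ
    simp only [WithLp.coe_symm_linearEquiv] at hms
    rw [WithLp.equiv_symm_apply, hms]
    refine Finset.sum_congr rfl fun j _ => ?_
    by_cases h : (j:ℕ) < k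
    · rw [if_pos h, if_pos h]
      have hinner : ⟪bb j, x⟫ = w j ⬝ᵥ (WithLp.equiv 2 (Fin n → ℝ)) x := by
        rw [hbb]
        conv_lhs => rw [← Equiv.symm_apply_apply (WithLp.equiv 2 (Fin n → ℝ)) x]
        rw [WithLp.equiv_symm_apply, EuclideanSpace.inner_toLp_toLp, dotProduct_comm]
        simp
      rw [hinner, hbb, WithLp.equiv_symm_apply, WithLp.toLp_smul]
    · rw [if_neg h, if_neg h]
      rw [WithLp.toLp_zero]
  have hPx := hproj u b hb Pk hPk
  have hQx := hproj ut bt hbt Ptk hPtk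
  -- spectral norms
  have hnorm1 : specNorm (Pk - Ptk) = ‖P - Q‖ := by
    rw [specNorm, hPdef, hQdef]
    congr 1
    rw [map_sub]
    rfl
  have hnorm2 : specNorm (A - At) = ‖𝒜 - ℬ‖ := by
    rw [specNorm, h𝒜, hℬ]
    congr 1
    rw [map_sub]
    rfl
  rw [hnorm1, hnorm2]
  -- apply the core lemma
  refine dk_core (k := k) (n := n) hk1 hkn (by simp) b bt lam lamt
    (lam ⟨k - 1, by omega⟩) (lamt ⟨k, hkn⟩) 𝒜 ℬ P Q h𝒜b hℬb hPx hQx ?_ ?_ h_gap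
  · intro j hj
    apply h_anti
    have : (j:ℕ) ≤ k - 1 := by omega
    exact this
  · intro j hj
    apply ht_anti
    exact hj
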